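/- (The Helmholtz Green's function kernel satisfies the modified Helmholtz equation away from its singularity.) Let E = EuclideanSpace ℝ (Fin 3), let a ∈ E, and let k ≥ 0 be a real number. Define w : E → ℝ by w(y) = exp(−k‖y − a‖)/‖y − a‖. Then for every x ∈ E with x ≠ a, w is twice continuously differentiable in a neighborhood of x and ∑_{i=1}^{3} ∂²w/∂y_i²(x) = k² · w(x). -/

import Mathlib

open Real

noncomputable def helmH (k : ℝ) : ℝ → ℝ :=
  fun s => Real.exp (-k * Real.sqrt s) / Real.sqrt s

noncomputable def helmH1 (k : ℝ) : ℝ → ℝ :=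
  fun s => -(Real.exp (-k * Real.sqrt s) * (k * Real.sqrt s + 1)) / (2 * s * Real.sqrt s)

noncomputable def helmH2 (k : ℝ) : ℝ → ℝ :=
  fun s => Real.exp (-k * Real.sqrt s) * (k ^ 2 * s + 3 * k * Real.sqrt s + 3)
    / (4 * s ^ 2 * Real.sqrt s)

lemma helm_sqrt_ne {s : ℝ} (hs : 0 < s) : Real.sqrt s ≠ 0 :=
  (Real.sqrt_pos.mpr hs).ne'

lemma helm_hasDerivAt_exp_sqrt (k : ℝ) {s : ℝ} (hs : 0 < s) :
    HasDerivAt (fun s => Real.exp (-k * Real.sqrt s))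
      (Real.exp (-k * Real.sqrt s) * (-k * (1 / (2 * Real.sqrt s)))) s := by
  have h1 : HasDerivAt (fun s => -k * Real.sqrt s) (-k * (1 / (2 * Real.sqrt s))) s :=
    (Real.hasDerivAt_sqrt hs.ne').const_mul (-k)
  simpa [mul_comm] using h1.exp

lemma helm_hasDerivAt_H (k : ℝ) {s : ℝ} (hs : 0 < s) :
    HasDerivAt (helmH k) (helmH1 k s) s := by
  have hs' := helm_sqrt_ne hs
  have h : HasDerivAt (fun s => Real.exp (-k * Real.sqrt s) / Real.sqrt s) _ s :=
    (helm_hasDerivAt_exp_sqrt k hs).div (Real.hasDerivAt_sqrt hs.ne') hs'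
  convert h using 1
  · rfl
  have hu2 : Real.sqrt s ^ 2 = s := Real.sq_sqrt hs.le
  have hupos : 0 < Real.sqrt s := Real.sqrt_pos.mpr hs
  set u := Real.sqrt s with hu
  clear_value u
  subst hu2
  simp only [helmH1, Real.sqrt_sq hupos.le]
  have hu0 : u ≠ 0 := hupos.ne'
  field_simp
  ring

lemma helm_hasDerivAt_H1 (k : ℝ) {s : ℝ} (hs : 0 < s) :
    HasDerivAt (helmH1 k) (helmH2 k s) s := by
  have hs' := helm_sqrt_ne hs
  have hnum : HasDerivAt (fun s => -(Real.exp (-k * Real.sqrt s) * (k * Real.sqrt s + 1)))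
      (-(Real.exp (-k * Real.sqrt s) * (-k * (1 / (2 * Real.sqrt s))) * (k * Real.sqrt s + 1)
        + Real.exp (-k * Real.sqrt s) * (k * (1 / (2 * Real.sqrt s))))) s := by
    exact (((helm_hasDerivAt_exp_sqrt k hs).mul
      (((Real.hasDerivAt_sqrt hs.ne').const_mul k).add_const 1))).neg
  have hden : HasDerivAt (fun s => 2 * s * Real.sqrt s)
      (2 * Real.sqrt s + 2 * s * (1 / (2 * Real.sqrt s))) s := by
    have : HasDerivAt (fun s => 2 * s * Real.sqrt s) _ s :=
      ((hasDerivAt_id s).const_mul 2).mul (Real.hasDerivAt_sqrt hs.ne')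
    convert this using 1
    simp
  have hden_ne : 2 * s * Real.sqrt s ≠ 0 := by positivity
  have h : HasDerivAt (fun s => -(Real.exp (-k * Real.sqrt s) * (k * Real.sqrt s + 1)) / (2 * s * Real.sqrt s)) _ s :=
    hnum.div hden hden_ne
  convert h using 1
  · rfl
  have hu2 : Real.sqrt s ^ 2 = s := Real.sq_sqrt hs.le
  have hupos : 0 < Real.sqrt s := Real.sqrt_pos.mpr hs
  set u := Real.sqrt s with hu
  clear_value u
  subst hu2
  simp only [helmH2, Real.sqrt_sq hupos.le]
  have hu0 : u ≠ 0 := hupos.ne'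
  field_simp
  ring

lemma helm_contDiffAt_H (k : ℝ) {s : ℝ} (hs : 0 < s) :
    ContDiffAt ℝ 2 (helmH k) s := by
  have hsq : ContDiffAt ℝ 2 Real.sqrt s := Real.contDiffAt_sqrt hs.ne'
  exact ((Real.contDiff_exp.contDiffAt.comp s (contDiffAt_const.mul hsq))).div hsq
    (helm_sqrt_ne hs)

theorem helmholtz_kernel_modified_helmholtz
    (a x : EuclideanSpace ℝ (Fin 3)) (k : ℝ) (hk : 0 ≤ k) (hx : x ≠ a) :
    ContDiffAt ℝ 2
      (fun y : EuclideanSpace ℝ (Fin 3) => Real.exp (-k * ‖y - a‖) / ‖y - a‖) x ∧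
    ∑ i : Fin 3,
      fderiv ℝ
        (fun y : EuclideanSpace ℝ (Fin 3) =>
          fderiv ℝ
            (fun z : EuclideanSpace ℝ (Fin 3) => Real.exp (-k * ‖z - a‖) / ‖z - a‖) y
            (EuclideanSpace.single i (1 : ℝ)))
        x (EuclideanSpace.single i (1 : ℝ))
      = k ^ 2 * (Real.exp (-k * ‖x - a‖) / ‖x - a‖) := by
  classical
  have hxa : (0 : ℝ) < ‖x - a‖ := by
    rw [norm_pos_iff, sub_ne_zero]; exact hx
  -- rewrite w as H ∘ (‖· - a‖ ^ 2)
  have hw : (fun y : EuclideanSpace ℝ (Fin 3) => Real.exp (-k * ‖y - a‖) / ‖y - a‖)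
      = fun y : EuclideanSpace ℝ (Fin 3) => helmH k (‖y - a‖ ^ 2) := by
    funext y
    simp [helmH, Real.sqrt_sq (norm_nonneg _)]
  -- derivative of q y = ‖y - a‖ ^ 2
  have hq : ∀ y : EuclideanSpace ℝ (Fin 3), HasFDerivAt (fun y : EuclideanSpace ℝ (Fin 3) => ‖y - a‖ ^ 2)
      (2 • ((innerSL ℝ (y - a)).comp (ContinuousLinearMap.id ℝ (EuclideanSpace ℝ (Fin 3))))) y := fun y =>
    ((hasFDerivAt_id y).sub_const a).norm_sq
  have hqpos : ∀ y : EuclideanSpace ℝ (Fin 3), y ≠ a → (0 : ℝ) < ‖y - a‖ ^ 2 := by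
    intro y hy
    have : (0 : ℝ) < ‖y - a‖ := by rw [norm_pos_iff, sub_ne_zero]; exact hy
    positivity
  -- first derivative of w
  have hD1 : ∀ y : EuclideanSpace ℝ (Fin 3), y ≠ a → HasFDerivAt (fun y : EuclideanSpace ℝ (Fin 3) => helmH k (‖y - a‖ ^ 2))
      (helmH1 k (‖y - a‖ ^ 2) • (2 • ((innerSL ℝ (y - a)).comp (ContinuousLinearMap.id ℝ (EuclideanSpace ℝ (Fin 3)))))) y :=
    fun y hy => by have := (helm_hasDerivAt_H k (hqpos y hy)).comp_hasFDerivAt y (hq y); exact this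
  -- the first partials agree with an explicit formula near x
  have hopen : ∀ᶠ y in nhds x, y ≠ a :=
    eventually_ne_nhds hx
  have hfd1 : ∀ i : Fin 3,
      (fun y : EuclideanSpace ℝ (Fin 3) => fderiv ℝ (fun z : EuclideanSpace ℝ (Fin 3) => Real.exp (-k * ‖z - a‖) / ‖z - a‖) y
          (EuclideanSpace.single i (1 : ℝ)))
        =ᶠ[nhds x] fun y : EuclideanSpace ℝ (Fin 3) => helmH1 k (‖y - a‖ ^ 2) * (2 * (y - a) i) := by
    intro i
    filter_upwards [hopen] with y hy
    rw [hw, (hD1 y hy).fderiv]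
    simp [real_inner_comm, EuclideanSpace.inner_single_left, EuclideanSpace.inner_single_right, mul_comm]
  -- second derivative pieces
  have hA : HasFDerivAt (fun y : EuclideanSpace ℝ (Fin 3) => helmH1 k (‖y - a‖ ^ 2))
      (helmH2 k (‖x - a‖ ^ 2) • (2 • ((innerSL ℝ (x - a)).comp (ContinuousLinearMap.id ℝ (EuclideanSpace ℝ (Fin 3)))))) x :=
    by have := (helm_hasDerivAt_H1 k (hqpos x hx)).comp_hasFDerivAt x (hq x); exact this
  have hB : ∀ i : Fin 3, HasFDerivAt (fun y : EuclideanSpace ℝ (Fin 3) => 2 * (y - a) i)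
      ((2 : ℝ) • (EuclideanSpace.proj i : EuclideanSpace ℝ (Fin 3) →L[ℝ] ℝ)) x := by
    intro i
    have : HasFDerivAt (fun y : EuclideanSpace ℝ (Fin 3) => (y - a) i) (EuclideanSpace.proj i : EuclideanSpace ℝ (Fin 3) →L[ℝ] ℝ) x := by
      have := ((EuclideanSpace.proj i : EuclideanSpace ℝ (Fin 3) →L[ℝ] ℝ).hasFDerivAt (x := x)).sub_const (a i)
      exact this
    simpa [smul_smul] using this.const_mul (2 : ℝ)
  have hsum : ∀ i : Fin 3,
      fderiv ℝ (fun y : EuclideanSpace ℝ (Fin 3) => fderiv ℝ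
          (fun z : EuclideanSpace ℝ (Fin 3) => Real.exp (-k * ‖z - a‖) / ‖z - a‖) y
          (EuclideanSpace.single i (1 : ℝ))) x (EuclideanSpace.single i (1 : ℝ))
        = helmH1 k (‖x - a‖ ^ 2) * 2
          + 2 * (x - a) i * (helmH2 k (‖x - a‖ ^ 2) * (2 * (x - a) i)) := by
    intro i
    rw [(hfd1 i).fderiv_eq, (show HasFDerivAt (fun y : EuclideanSpace ℝ (Fin 3) => helmH1 k (‖y - a‖ ^ 2) * (2 * (y - a) i)) _ x from hA.mul (hB i)).fderiv]
    simp [real_inner_comm, EuclideanSpace.inner_single_left, EuclideanSpace.inner_single_right, EuclideanSpace.single_apply, mul_comm, mul_assoc, mul_left_comm]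
  constructor
  · rw [hw]
    exact (helm_contDiffAt_H k (hqpos x hx)).comp x
      (((contDiff_id.sub contDiff_const).norm_sq ℝ).contDiffAt)
  · rw [Finset.sum_congr rfl fun i _ => hsum i]
    have hnorm : ∑ i : Fin 3, (x - a) i ^ 2 = ‖x - a‖ ^ 2 := by
      rw [EuclideanSpace.norm_eq]
      rw [Real.sq_sqrt (by positivity)]
      exact Finset.sum_congr rfl fun i _ => by
        rw [Real.norm_eq_abs, sq_abs]
    rw [Finset.sum_add_distrib, Finset.sum_const]
    have hsum2 : ∑ i : Fin 3, 2 * (x - a) i * (helmH2 k (‖x - a‖ ^ 2) * (2 * (x - a) i))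
        = 4 * helmH2 k (‖x - a‖ ^ 2) * ∑ i : Fin 3, (x - a) i ^ 2 := by
      rw [Finset.mul_sum]
      exact Finset.sum_congr rfl fun i _ => by ring
    rw [hsum2, hnorm]
    -- final algebra
    have hu2 : Real.sqrt (‖x - a‖ ^ 2) = ‖x - a‖ := Real.sqrt_sq (norm_nonneg _)
    simp only [helmH1, helmH2, hu2, Finset.card_univ, Fintype.card_fin, nsmul_eq_mul]
    have hr : ‖x - a‖ ≠ 0 := hxa.ne'
    field_simp
    ring
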